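/- arXiv:1709.10422 — 4 statements merged into one kernel-verified Lean document; each statement's English description precedes it below -/
import Mathlib

section
/- Let G be a finite p-group with G' powerful and d(G') ≤ 2, and let C = C_G(G'/(G')^p). Then the index |G : C| is at most p. -/
/-- The subgroup generated by `n`-th powers of elements of `H`. -/
def subPow {G : Type*} [Group G] (H : Subgroup G) (n : ℕ) : Subgroup G :=
  Subgroup.closure ((· ^ n) '' (H : Set G))

/-- A subgroup `H` of a (finite) `p`-group is powerful if `H' ≤ H^p` for `p` odd,
or `H' ≤ H^4` for `p = 2`. -/
def IsPowerfulSubgroup (p : ℕ) {G : Type*} [Group G] (H : Subgroup G) : Prop :=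
  if p = 2 then ⁅H, H⁆ ≤ subPow H 4 else ⁅H, H⁆ ≤ subPow H p

open scoped commutatorElement

lemma aux_not_dvd (p : ℕ) [hp : Fact p.Prime] (V : Type*) [CommGroup V] [Finite V]
    (hexp : ∀ v : V, v ^ p = 1) (a b : V)
    (hgen : Subgroup.closure ({a, b} : Set V) = ⊤) :
    ¬ p ^ 2 ∣ Nat.card (MulAut V) := by
  have hp1 := hp.out.one_lt
  haveI : NeZero p := ⟨hp.out.ne_zero⟩
  have hmod : ∀ x : Additive V, p • x = 0 := by
    intro x
    show Additive.ofMul ((Additive.toMul x) ^ p) = 0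
    rw [hexp]; rfl
  haveI : Module (ZMod p) (Additive V) := AddCommGroup.zmodModule hmod
  -- span
  have hspan : Submodule.span (ZMod p) ({Additive.ofMul a, Additive.ofMul b} :
      Set (Additive V)) = ⊤ := by
    rw [eq_top_iff]
    rintro x -
    obtain ⟨y, rfl⟩ : ∃ y, Additive.ofMul y = x := ⟨Additive.toMul x, rfl⟩
    have hx : y ∈ Subgroup.closure ({a, b} : Set V) := by
      rw [hgen]; trivial
    induction hx using Subgroup.closure_induction with
    | mem y hy =>
        rcases hy with rfl | rfl
        · exact Submodule.subset_span (Or.inl rfl)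
        · exact Submodule.subset_span (Or.inr rfl)
    | one => exact Submodule.zero_mem _
    | mul y z hy hz hy' hz' => exact Submodule.add_mem _ hy' hz'
    | inv y hy hy' => exact Submodule.neg_mem _ hy'
  have hd : Module.finrank (ZMod p) (Additive V) ≤ 2 := by
    classical
    have h1 := finrank_span_le_card (R := ZMod p)
      ({Additive.ofMul a, Additive.ofMul b} : Set (Additive V))
    rw [hspan, finrank_top] at h1
    refine h1.trans ?_
    have : ({Additive.ofMul a, Additive.ofMul b} : Set (Additive V)).toFinset =
        ({Additive.ofMul a, Additive.ofMul b} : Finset (Additive V)) := by simp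
    rw [this]
    exact (Finset.card_insert_le _ _).trans (by simp)
  set d := Module.finrank (ZMod p) (Additive V) with hdd
  have bV : Module.Basis (Fin d) (ZMod p) (Additive V) := Module.finBasis _ _
  have e1 : MulAut V ≃ (Additive V ≃+ Additive V) := MulEquiv.toAdditive
  have e2 : (Additive V ≃+ Additive V) ≃ (Additive V ≃ₗ[ZMod p] Additive V) :=
    { toFun := fun f => f.toLinearEquiv (fun c x => ZMod.map_smul f c x)
      invFun := fun g => g.toAddEquiv
      left_inv := fun f => rfl
      right_inv := fun g => rfl }
  have e3 : (Additive V ≃ₗ[ZMod p] Additive V) ≃*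
      LinearMap.GeneralLinearGroup (ZMod p) (Additive V) :=
    (LinearMap.GeneralLinearGroup.generalLinearEquiv _ _).symm
  have e4 : LinearMap.GeneralLinearGroup (ZMod p) (Additive V) ≃* GL (Fin d) (ZMod p) :=
    Units.mapEquiv (LinearMap.toMatrixAlgEquiv bV).toMulEquiv
  have hcard : Nat.card (MulAut V) = ∏ i : Fin d, (p ^ d - p ^ (i : ℕ)) := by
    rw [Nat.card_congr (e1.trans (e2.trans (e3.toEquiv.trans e4.toEquiv)))]
    rw [Matrix.card_GL_field]
    simp [ZMod.card]
  intro hdvd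
  rw [hcard] at hdvd
  have hpp : p < p ^ 2 := by nlinarith
  interval_cases d
  · simp only [Finset.univ_eq_empty, Finset.prod_empty] at hdvd
    have := Nat.le_of_dvd one_pos hdvd
    nlinarith
  · rw [Fin.prod_univ_one] at hdvd
    simp only [pow_one, Fin.val_zero, pow_zero] at hdvd
    have h0 : 0 < p - 1 := by omega
    have h4 := Nat.le_of_dvd h0 hdvd
    have hlt : p ^ 2 < p := lt_of_le_of_lt h4 (by omega)
    exact Nat.lt_irrefl _ (hlt.trans hpp)
  · rw [Fin.prod_univ_two] at hdvd
    simp only [Fin.val_zero, Fin.val_one, pow_zero, pow_one] at hdvd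
    have hp0 : 0 < p ^ 2 := pow_pos (by omega) 2
    have hco : Nat.Coprime (p ^ 2) (p ^ 2 - 1) :=
      (Nat.coprime_self_sub_right hp0).mpr (Nat.coprime_one_right _)
    have h2 : p ^ 2 ∣ p ^ 2 - p := Nat.Coprime.dvd_of_dvd_mul_left hco hdvd
    have h3 : 0 < p ^ 2 - p := Nat.sub_pos_of_lt hpp
    have h6 := Nat.le_of_dvd h3 h2
    have hlt : p ^ 2 - p < p ^ 2 := Nat.sub_lt hp0 (by omega)
    exact Nat.lt_irrefl _ (lt_of_le_of_lt h6 hlt)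
namespace IndexAux

variable {G : Type*} [Group G]

lemma subPow_le (H : Subgroup G) (n : ℕ) : subPow H n ≤ H :=
  (Subgroup.closure_le H).mpr (by rintro _ ⟨x, hx, rfl⟩; exact pow_mem hx n)

lemma pow_mem_subPow (H : Subgroup G) (n : ℕ) {x : G} (hx : x ∈ H) : x ^ n ∈ subPow H n :=
  Subgroup.subset_closure ⟨x, hx, rfl⟩

lemma subPow_four_le_two (H : Subgroup G) : subPow H 4 ≤ subPow H 2 :=
  (Subgroup.closure_le _).mpr (by
    rintro _ ⟨x, hx, rfl⟩
    show x ^ 4 ∈ (subPow H 2 : Set G)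
    have h4 : x ^ 4 = (x ^ 2) ^ 2 := by group
    rw [h4]
    exact pow_mem_subPow H 2 (pow_mem hx 2))

lemma subPow_normal (H : Subgroup G) [hH : H.Normal] (n : ℕ) : (subPow H n).Normal := by
  constructor
  intro x hx g
  have hmap : (subPow H n).map (MulAut.conj g).toMonoidHom ≤ subPow H n := by
    rw [subPow, MonoidHom.map_closure]
    refine (Subgroup.closure_le _).mpr ?_
    rintro _ ⟨_, ⟨y, hy, rfl⟩, rfl⟩
    have : (MulAut.conj g).toMonoidHom (y ^ n) = (g * y * g⁻¹) ^ n := by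
      simp [map_pow]
    rw [this]
    exact pow_mem_subPow H n (hH.conj_mem y hy g)
  exact hmap ⟨x, hx, rfl⟩

variable (Γ K : Subgroup G) [hΓ : Γ.Normal] [hK : K.Normal]

instance : (K.subgroupOf Γ).Normal := hK.subgroupOf Γ

/-- conjugation on the quotient, as a monoid hom. -/
def q (g : G) : (Γ ⧸ K.subgroupOf Γ) →* (Γ ⧸ K.subgroupOf Γ) :=
  QuotientGroup.lift _ ((QuotientGroup.mk' _).comp (MulAut.conjNormal g).toMonoidHom) (by
    intro x hx
    rw [MonoidHom.mem_ker, MonoidHom.comp_apply, QuotientGroup.mk'_apply,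
      QuotientGroup.eq_one_iff]
    rw [Subgroup.mem_subgroupOf] at hx ⊢
    simpa [MulAut.conjNormal_apply] using hK.conj_mem _ hx g)

lemma q_mk (g : G) (x : Γ) :
    q Γ K g (QuotientGroup.mk x) = QuotientGroup.mk (MulAut.conjNormal g x) := rfl

/-- conjugation action of `G` on `Γ ⧸ K`. -/
def φ : G →* MulAut (Γ ⧸ K.subgroupOf Γ) where
  toFun g :=
    { toFun := q Γ K g
      invFun := q Γ K g⁻¹
      left_inv := by
        intro v
        induction v using QuotientGroup.induction_on with
        | H x =>
          rw [q_mk, q_mk]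
          congr 1
          ext
          simp only [MulAut.conjNormal_apply]
          group
      right_inv := by
        intro v
        induction v using QuotientGroup.induction_on with
        | H x =>
          rw [q_mk, q_mk]
          congr 1
          ext
          simp only [MulAut.conjNormal_apply]
          group
      map_mul' := (q Γ K g).map_mul }
  map_one' := by
    ext v
    induction v using QuotientGroup.induction_on with
    | H x =>
      show q Γ K 1 (QuotientGroup.mk x) = QuotientGroup.mk x
      rw [q_mk]
      congr 1
      ext
      simp [MulAut.conjNormal_apply]
  map_mul' g h := by
    ext v
    induction v using QuotientGroup.induction_on with
    | H x =>
      show q Γ K (g * h) (QuotientGroup.mk x) = q Γ K g (q Γ K h (QuotientGroup.mk x))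
      rw [q_mk, q_mk, q_mk]
      congr 1
      ext
      simp only [MulAut.conjNormal_apply]
      group

lemma mem_ker_φ (g : G) :
    g ∈ (φ Γ K).ker ↔ ∀ a : G, a ∈ Γ → ⁅g, a⁆ ∈ K := by
  rw [MonoidHom.mem_ker]
  constructor
  · intro h a ha
    have h2 : q Γ K g (QuotientGroup.mk (⟨a⁻¹, inv_mem ha⟩ : Γ)) =
        QuotientGroup.mk (⟨a⁻¹, inv_mem ha⟩ : Γ) := by
      exact DFunLike.congr_fun h (QuotientGroup.mk (⟨a⁻¹, inv_mem ha⟩ : Γ))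
    rw [q_mk, QuotientGroup.eq] at h2
    rw [Subgroup.mem_subgroupOf] at h2
    have h3 : (((MulAut.conjNormal g (⟨a⁻¹, inv_mem ha⟩ : Γ))⁻¹ *
        (⟨a⁻¹, inv_mem ha⟩ : Γ) : Γ) : G) = ⁅g, a⁆ := by
      push_cast
      simp only [MulAut.conjNormal_apply]
      group
    rwa [h3] at h2
  · intro h
    apply MulEquiv.ext
    intro v
    induction v using QuotientGroup.induction_on with
    | H x =>
      show q Γ K g (QuotientGroup.mk x) = QuotientGroup.mk x
      rw [q_mk, QuotientGroup.eq]
      rw [Subgroup.mem_subgroupOf]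
      have h3 : (((MulAut.conjNormal g x)⁻¹ * x : Γ) : G) = ⁅g, (x : G)⁻¹⁆ := by
        push_cast
        simp only [MulAut.conjNormal_apply]
        group
      rw [h3]
      exact h (x : G)⁻¹ (inv_mem x.2)

end IndexAux

/-- If `G` is a finite `p`-group with `G'` powerful and `d(G') ≤ 2`, and
`C = C_G(G'/(G')^p)`, then `|G : C| ≤ p`. -/
theorem index_centralizer_le
    {p : ℕ} [Fact p.Prime] {G : Type*} [Group G] [Finite G]
    (hG : IsPGroup p G)
    (hpow : IsPowerfulSubgroup p (commutator G))
    (hgen : ∃ a b : G, commutator G = Subgroup.closure {a, b})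
    (C : Subgroup G)
    (hC : ∀ g : G, g ∈ C ↔ ∀ a ∈ commutator G, ⁅g, a⁆ ∈ subPow (commutator G) p) :
    C.index ≤ p := by
  obtain ⟨a, b, hab⟩ := hgen
  set Γ := commutator G with hGdef
  set K := subPow Γ p with hKdef
  haveI hKn : K.Normal := IndexAux.subPow_normal Γ p
  have hcommK : ⁅Γ, Γ⁆ ≤ K := by
    unfold IsPowerfulSubgroup at hpow
    by_cases h2 : p = 2
    · rw [if_pos h2] at hpow
      refine hpow.trans ?_
      rw [hKdef, h2]
      exact IndexAux.subPow_four_le_two Γ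
    · rwa [if_neg h2] at hpow
  set V := Γ ⧸ K.subgroupOf Γ with hVdef
  letI : CommGroup V :=
    { (inferInstance : Group V) with
      mul_comm := by
        intro x y
        induction x using QuotientGroup.induction_on with | H u =>
        induction y using QuotientGroup.induction_on with | H v =>
        rw [← QuotientGroup.mk_mul, ← QuotientGroup.mk_mul, QuotientGroup.eq,
          Subgroup.mem_subgroupOf]
        have h1 : (((u * v)⁻¹ * (v * u) : Γ) : G) = ⁅(v : G)⁻¹, (u : G)⁻¹⁆ := by
          rw [commutatorElement_def]
          push_cast
          group
        rw [h1]
        exact hcommK (Subgroup.commutator_mem_commutator (inv_mem v.2) (inv_mem u.2)) }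
  have hexp : ∀ v : V, v ^ p = 1 := by
    intro v
    induction v using QuotientGroup.induction_on with | H x =>
    have h1 : (QuotientGroup.mk x : V) ^ p = QuotientGroup.mk (x ^ p) := by
      rw [← QuotientGroup.mk'_apply, ← map_pow, QuotientGroup.mk'_apply]
    rw [h1, QuotientGroup.eq_one_iff, Subgroup.mem_subgroupOf]
    have h2 : ((x ^ p : Γ) : G) = (x : G) ^ p := by push_cast; rfl
    rw [h2]
    exact IndexAux.pow_mem_subPow Γ p x.2
  have haΓ : a ∈ Γ := by rw [hab]; exact Subgroup.subset_closure (by simp)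
  have hbΓ : b ∈ Γ := by rw [hab]; exact Subgroup.subset_closure (by simp)
  set a' : Γ := ⟨a, haΓ⟩ with ha'
  set b' : Γ := ⟨b, hbΓ⟩ with hb'
  have hgenΓ : Subgroup.closure ({a', b'} : Set Γ) = ⊤ := by
    rw [eq_top_iff]
    rintro x -
    have hx : (x : G) ∈ Subgroup.closure ({a, b} : Set G) := by rw [← hab]; exact x.2
    have hsub : Subgroup.closure ({a, b} : Set G) ≤
        (Subgroup.closure ({a', b'} : Set Γ)).map Γ.subtype := by
      refine (Subgroup.closure_le _).mpr ?_
      rintro y (rfl | rfl)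
      · exact ⟨a', Subgroup.subset_closure (Or.inl rfl), rfl⟩
      · exact ⟨b', Subgroup.subset_closure (Or.inr rfl), rfl⟩
    obtain ⟨y, hy, hyx⟩ := hsub hx
    have hxy : y = x := Subtype.ext hyx
    exact hxy ▸ hy
  have hgenV : Subgroup.closure
      ({QuotientGroup.mk a', QuotientGroup.mk b'} : Set V) = ⊤ := by
    have h1 : ({QuotientGroup.mk a', QuotientGroup.mk b'} : Set V) =
        (QuotientGroup.mk' (K.subgroupOf Γ)) '' ({a', b'} : Set Γ) := by
      simp [Set.image_insert_eq]
    rw [h1, ← MonoidHom.map_closure, hgenΓ]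
    rw [← MonoidHom.range_eq_map]
    exact MonoidHom.range_eq_top.mpr (QuotientGroup.mk'_surjective _)
  haveI : Finite V := Quotient.finite _
  set Φ := IndexAux.φ Γ K with hΦ
  have hCker : C = Φ.ker := by
    ext g
    rw [hC g, IndexAux.mem_ker_φ]
  rw [hCker, Subgroup.index_ker]
  have hrangeP : IsPGroup p Φ.range :=
    hG.of_surjective Φ.rangeRestrict Φ.rangeRestrict_surjective
  haveI : Finite (MulAut V) :=
    Finite.of_injective (fun e => (e : V ≃ V))
      (fun e f h => by ext v; exact congrArg (fun q : V ≃ V => q v) h)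
  obtain ⟨k, hk⟩ := IsPGroup.iff_card.mp hrangeP
  rw [hk]
  have hdvd : p ^ k ∣ Nat.card (MulAut V) := hk ▸ Subgroup.card_subgroup_dvd_card Φ.range
  have hnot : ¬ p ^ 2 ∣ Nat.card (MulAut V) :=
    aux_not_dvd p V hexp _ _ hgenV
  have hp1 : 1 ≤ p := (Fact.out : p.Prime).one_lt.le
  rcases Nat.lt_or_ge k 2 with hk2 | hk2
  · calc p ^ k ≤ p ^ 1 := Nat.pow_le_pow_right hp1 (by omega)
    _ = p := pow_one p
  · exact absurd ((pow_dvd_pow p hk2).trans hdvd) hnot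
end

section
/- Let G be a non-abelian finite p-group. For a subgroup T that is maximal among proper normal subgroups of G contained in G', define D(T) by D(T)/T = Z(G/T), and let D be the union of all such D(T). Then for x ∈ G, one has [x,G] = G' if and only if x ∉ D. -/
/-- `T` is maximal among the proper subgroups of `G'` that are normal in `G`. -/
def MaxNormalInDerived {G : Type*} [Group G] (T : Subgroup G) : Prop :=
  T.Normal ∧ T < commutator G ∧
    ∀ S : Subgroup G, S.Normal → S < commutator G → T ≤ S → S = T

open scoped commutatorElement

/-- In a non-abelian finite `p`-group, `[x,G] = G'` if and only if `x` lies in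
no `D(T)` (where `D(T)/T = Z(G/T)`, i.e. `x ∈ D(T) ↔ [x,G] ≤ T`), for
`T` maximal among `G`-normal proper subgroups of `G'`. -/
theorem commutator_eq_derived_iff_not_mem_D
    {p : ℕ} [Fact p.Prime] {G : Type*} [Group G] [Finite G]
    (hG : IsPGroup p G) (hnab : ∃ a b : G, a * b ≠ b * a) (x : G) :
    Subgroup.closure {y : G | ∃ g : G, y = ⁅x, g⁆} = commutator G ↔
      ¬ ∃ T : Subgroup G, MaxNormalInDerived T ∧ ∀ g : G, ⁅x, g⁆ ∈ T := by
  set K : Subgroup G := Subgroup.closure {y : G | ∃ g : G, y = ⁅x, g⁆} with hK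
  have hKle : K ≤ commutator G := by
    rw [hK, Subgroup.closure_le]
    rintro y ⟨g, rfl⟩
    rw [commutator_def]
    exact Subgroup.commutator_mem_commutator (Subgroup.mem_top x) (Subgroup.mem_top g)
  have hmap : ∀ g : G, Subgroup.map (MulAut.conj g).toMonoidHom K ≤ K := by
    intro g
    rw [hK, MonoidHom.map_closure, Subgroup.closure_le]
    rintro _ ⟨_, ⟨h, rfl⟩, rfl⟩
    have heq : (MulAut.conj g).toMonoidHom ⁅x, h⁆ = ⁅x, g⁆⁻¹ * ⁅x, g * h⁆ := by
      simp only [MulEquiv.coe_toMonoidHom, MulAut.conj_apply, commutatorElement_def]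
      group
    rw [heq]
    exact mul_mem (inv_mem (Subgroup.subset_closure ⟨g, rfl⟩))
      (Subgroup.subset_closure ⟨g * h, rfl⟩)
  have hKnorm : K.Normal := ⟨fun n hn g => hmap g ⟨n, hn, rfl⟩⟩
  constructor
  · rintro hKeq ⟨T, ⟨hTn, hTlt, hTmax⟩, hTx⟩
    have hle : K ≤ T := by
      rw [hK, Subgroup.closure_le]
      rintro y ⟨g, rfl⟩
      exact hTx g
    rw [hKeq] at hle
    exact hTlt.not_ge hle
  · intro hne
    by_contra hKne
    apply hne
    have hKlt : K < commutator G := lt_of_le_of_ne hKle hKne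
    obtain ⟨T, ⟨hTn, hTlt, hKT⟩, hmax⟩ :=
      Set.Finite.exists_maximalFor id
        {S : Subgroup G | S.Normal ∧ S < commutator G ∧ K ≤ S}
        (Set.toFinite _) ⟨K, hKnorm, hKlt, le_refl K⟩
    refine ⟨T, ⟨hTn, hTlt, fun S hSn hSlt hTS =>
      le_antisymm (hmax (j := S) ⟨hSn, hSlt, hKT.trans hTS⟩ hTS) hTS⟩, fun g =>
      hKT (Subgroup.subset_closure ⟨g, rfl⟩)⟩
end

section
/- Let G be a finite p-group in which every conjugacy class has size at most p (i.e., G has breadth at most 1). Then |G'| ≤ p. -/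
open scoped commutatorElement

section Aux

set_option linter.unusedSectionVars false

variable {p : ℕ} [Fact p.Prime] {G : Type*} [Group G] [Finite G]

lemma breadth_centralizer_index_le
    (hbr : ∀ x : G, Nat.card {y : G | IsConj x y} ≤ p) (x : G) :
    (Subgroup.centralizer ({x} : Set G)).index ≤ p := by
  rw [Subgroup.centralizer_eq_comap_stabilizer]
  erw [Subgroup.index_comap_of_surjective _ (f := (ConjAct.toConjAct (G := G)).toMonoidHom) (ConjAct.toConjAct (G := G)).surjective,
    MulAction.index_stabilizer]
  have h : MulAction.orbit (ConjAct G) x = {y : G | IsConj x y} := by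
    ext y
    rw [ConjAct.mem_orbit_conjAct]
    exact isConj_comm
  rw [h, ← Nat.card_coe_set_eq]
  exact hbr x

lemma normal_of_index_eq_p (hG : IsPGroup p G) {H : Subgroup G} (hH : H.index = p) :
    H.Normal := by
  have hp : p.Prime := Fact.out
  have hnil : Group.IsNilpotent G := hG.isNilpotent
  refine Subgroup.NormalizerCondition.normal_of_coatom H normalizerCondition_of_isNilpotent ⟨?_, ?_⟩
  · intro htop
    rw [htop, Subgroup.index_top] at hH
    exact hp.one_lt.ne hH
  · intro K hK
    have hdvd : K.index ∣ p := hH ▸ Subgroup.index_dvd_of_le hK.le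
    rcases (Nat.dvd_prime hp).mp hdvd with h1 | h1
    · exact Subgroup.index_eq_one.mp h1
    · exfalso
      have := Subgroup.relIndex_mul_index hK.le
      rw [h1, hH] at this
      have hrel : H.relIndex K = 1 :=
        Nat.eq_of_mul_eq_mul_right hp.pos (by rw [this, one_mul])
      exact hK.not_ge (Subgroup.relIndex_eq_one.mp hrel)

lemma commutator_central_of_breadth_le_one (hG : IsPGroup p G)
    (hbr : ∀ x : G, Nat.card {y : G | IsConj x y} ≤ p) (g h x : G) :
    ⁅g, h⁆ * x = x * ⁅g, h⁆ := by
  have hp : p.Prime := Fact.out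
  set H := Subgroup.centralizer ({x} : Set G) with hH
  have hmem : ⁅g, h⁆ ∈ H := by
    have hle : H.index ≤ p := breadth_centralizer_index_le hbr x
    have hdvd : H.index ∣ Nat.card G := H.index_dvd_card
    obtain ⟨n, hn⟩ := IsPGroup.iff_card.mp hG
    rw [hn] at hdvd
    obtain ⟨k, hk, hik⟩ := (Nat.dvd_prime_pow hp).mp hdvd
    have hk1 : k ≤ 1 := by
      by_contra hk2
      push_neg at hk2
      have : p ^ 2 ≤ p ^ k := Nat.pow_le_pow_right hp.pos hk2
      have : p ^ 2 ≤ p := le_trans this (hik ▸ hle)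
      nlinarith [hp.two_le]
    interval_cases k
    · have : H = ⊤ := Subgroup.index_eq_one.mp (by simpa using hik)
      rw [this]; trivial
    · have hidx : H.index = p := by simpa using hik
      haveI := normal_of_index_eq_p hG hidx
      have hcard : Nat.card (G ⧸ H) = p := by
        rw [← Subgroup.index_eq_card]; exact hidx
      haveI : IsCyclic (G ⧸ H) := isCyclic_of_prime_card hcard
      letI : CommGroup (G ⧸ H) := IsCyclic.commGroup
      rw [← QuotientGroup.eq_one_iff]
      have : ((⁅g, h⁆ : G) : G ⧸ H) = ⁅(g : G ⧸ H), (h : G ⧸ H)⁆ := by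
        simp [commutatorElement_def]
      rw [this, commutatorElement_eq_one_iff_commute]
      exact mul_comm _ _
  have := Subgroup.mem_centralizer_iff.mp hmem x rfl
  exact this.symm

end Aux

/-- A finite `p`-group of breadth at most `1` (all conjugacy classes of size
at most `p`) has derived subgroup of order at most `p`. -/
theorem card_derived_le_of_breadth_le_one
    {p : ℕ} [Fact p.Prime] {G : Type*} [Group G] [Finite G]
    (hG : IsPGroup p G)
    (hbr : ∀ x : G, Nat.card {y : G | IsConj x y} ≤ p) :
    Nat.card (commutator G) ≤ p := by
  classical
  have hp : p.Prime := Fact.out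
  have hcen := commutator_central_of_breadth_le_one hG hbr
  have hmul : ∀ x a b : G, ⁅a * b, x⁆ = ⁅a, x⁆ * ⁅b, x⁆ := by
    intro x a b
    have h1 : ⁅a * b, x⁆ = a * ⁅b, x⁆ * a⁻¹ * ⁅a, x⁆ := by
      simp only [commutatorElement_def]; group
    rw [h1, ← hcen b x a, mul_assoc ⁅b, x⁆ a a⁻¹]
    simp only [mul_inv_cancel, mul_one]
    exact (hcen a x ⁅b, x⁆).symm
  let φ : G → G →* G := fun x => MonoidHom.mk' (fun g => ⁅g, x⁆) (fun a b => hmul x a b)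
  have hφ : ∀ x g : G, φ x g = ⁅g, x⁆ := fun _ _ => rfl
  have hconj : ∀ x g : G, ⁅g, x⁆ * x = g * x * g⁻¹ := by
    intro x g; rw [commutatorElement_def]; group
  have hScard : ∀ x : G, Nat.card ((φ x).range) ≤ p := by
    intro x
    have hmem : ∀ k : (φ x).range, (k : G) * x ∈ {y : G | IsConj x y} := by
      rintro ⟨k, g, rfl⟩
      show IsConj x (φ x g * x)
      rw [isConj_iff]
      exact ⟨g, by rw [hφ, ← hconj x g]⟩
    let f : (φ x).range → {y : G | IsConj x y} := fun k => ⟨(k : G) * x, hmem k⟩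
    have hinj : Function.Injective f := by
      intro k1 k2 hk
      have h2 : (k1 : G) * x = (k2 : G) * x := congrArg Subtype.val hk
      exact Subtype.ext (mul_right_cancel h2)
    exact le_trans (Nat.card_le_card_of_injective f hinj) (hbr x)
  obtain ⟨n, hn⟩ := IsPGroup.iff_card.mp hG
  have hzp : ∀ A : Subgroup G, Nat.card A ≤ p → ∀ a : G, a ∈ A → a ≠ 1 →
      A = Subgroup.zpowers a := by
    intro A hA a ha hane
    have hle : Subgroup.zpowers a ≤ A := Subgroup.zpowers_le.mpr ha
    have hdvdA : Nat.card A ∣ p ^ n := hn ▸ Subgroup.card_subgroup_dvd_card A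
    obtain ⟨k, hk, hAk⟩ := (Nat.dvd_prime_pow hp).mp hdvdA
    have hk1 : k ≤ 1 := by
      by_contra hk2
      push_neg at hk2
      have h2 : p ^ 2 ≤ p ^ k := Nat.pow_le_pow_right hp.pos hk2
      nlinarith [hp.two_le, hAk ▸ hA]
    have hAp : Nat.card A = p := by
      interval_cases k
      · exfalso
        have hbot : A = ⊥ := Subgroup.card_eq_one.mp (by simpa using hAk)
        exact hane (Subgroup.mem_bot.mp (hbot ▸ ha))
      · simpa using hAk
    have hzne : Nat.card (Subgroup.zpowers a) ≠ 1 := by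
      intro h1
      have hbot : Subgroup.zpowers a = ⊥ := Subgroup.card_eq_one.mp h1
      exact hane (Subgroup.mem_bot.mp (hbot ▸ Subgroup.mem_zpowers a))
    have hzdvd : Nat.card (Subgroup.zpowers a) ∣ p ^ n :=
      hn ▸ Subgroup.card_subgroup_dvd_card _
    obtain ⟨j, hj, hzj⟩ := (Nat.dvd_prime_pow hp).mp hzdvd
    have hj1 : 1 ≤ j := by
      rcases Nat.eq_zero_or_pos j with h0 | h0
      · exact absurd (by simpa [h0] using hzj) hzne
      · exact h0
    have hzle : Nat.card (Subgroup.zpowers a) ≤ p := hAp ▸ Subgroup.card_le_of_le hle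
    have hzp' : Nat.card (Subgroup.zpowers a) = p := by
      have : p ≤ p ^ j := by
        calc p = p ^ 1 := (pow_one p).symm
        _ ≤ p ^ j := Nat.pow_le_pow_right hp.pos hj1
      omega
    exact (Subgroup.eq_of_le_of_card_ge hle (by rw [hAp, hzp'])).symm
  have hkey : ∀ x y w : G, w ∈ (φ x).range → w ∈ (φ y).range → w ≠ 1 →
      (φ x).range = (φ y).range := by
    intro x y w hwx hwy hw
    rw [hzp _ (hScard x) w hwx hw, hzp _ (hScard y) w hwy hw]
  by_cases htriv : ∀ g h : G, ⁅g, h⁆ = 1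
  · have hbot : commutator G = ⊥ := by
      rw [commutator_def, eq_bot_iff, Subgroup.commutator_le]
      intro g _ h _
      rw [htriv g h]
      exact Subgroup.one_mem ⊥
    rw [hbot, Subgroup.card_bot]
    exact hp.one_lt.le
  · push_neg at htriv
    obtain ⟨a, u, hs⟩ := htriv
    set S := (φ u).range with hSdef
    have hsS : ⁅a, u⁆ ∈ S := ⟨a, rfl⟩
    have hmain : ∀ b h : G, ⁅b, h⁆ ∈ S := by
      intro b h
      by_contra htS
      have htne : ⁅b, h⁆ ≠ 1 := fun e => htS (e ▸ S.one_mem)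
      have hSa : (φ a).range = S := by
        refine hkey a u ⁅u, a⁆ ⟨u, rfl⟩ ((commutatorElement_inv a u) ▸ S.inv_mem hsS) ?_
        intro e
        exact hs (by rwa [← commutatorElement_inv, inv_eq_one] at e)
      have hah : ⁅a, h⁆ = 1 := by
        by_contra hne
        have h1 : ⁅a, h⁆ ∈ (φ h).range := ⟨a, rfl⟩
        have h2 : ⁅h, a⁆ ∈ (φ a).range := ⟨h, rfl⟩
        have h3 : ⁅a, h⁆ ∈ S := by
          rw [← hSa]
          exact (commutatorElement_inv h a) ▸ (φ a).range.inv_mem h2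
        have heq : (φ h).range = S := hkey h u ⁅a, h⁆ h1 h3 hne
        exact htS (heq ▸ (⟨b, rfl⟩ : ⁅b, h⁆ ∈ (φ h).range))
      have hbu : ⁅b, u⁆ = 1 := by
        by_contra hne
        have h1 : ⁅b, u⁆ ∈ S := ⟨b, rfl⟩
        have h2 : ⁅u, b⁆ ∈ (φ b).range := ⟨u, rfl⟩
        have h3 : ⁅b, u⁆ ∈ (φ b).range :=
          (commutatorElement_inv u b) ▸ (φ b).range.inv_mem h2
        have heq : (φ b).range = S := hkey b u ⁅b, u⁆ h3 h1 hne
        have h4 : ⁅h, b⁆ ∈ S := heq ▸ (⟨h, rfl⟩ : ⁅h, b⁆ ∈ (φ b).range)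
        exact htS ((commutatorElement_inv h b) ▸ S.inv_mem h4)
      have hab_u : ⁅a * b, u⁆ = ⁅a, u⁆ := by rw [hmul u a b, hbu, mul_one]
      have hab_h : ⁅a * b, h⁆ = ⁅b, h⁆ := by rw [hmul h a b, hah, one_mul]
      have m1 : ⁅u, a * b⁆ ∈ (φ (a * b)).range := ⟨u, rfl⟩
      have m1' : ⁅u, a * b⁆ = ⁅a, u⁆⁻¹ := by
        rw [← hab_u]; exact (commutatorElement_inv (a * b) u).symm
      have hne' : ⁅a, u⁆⁻¹ ≠ 1 := fun e => hs (inv_eq_one.mp e)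
      have heq2 : (φ (a * b)).range = S :=
        hkey (a * b) u ⁅a, u⁆⁻¹ (m1' ▸ m1) (S.inv_mem hsS) hne'
      have m2 : ⁅h, a * b⁆ ∈ (φ (a * b)).range := ⟨h, rfl⟩
      have m2' : ⁅h, a * b⁆ = ⁅b, h⁆⁻¹ := by
        rw [← hab_h]; exact (commutatorElement_inv (a * b) h).symm
      have hfin : ⁅b, h⁆⁻¹ ∈ S := heq2 ▸ (m2' ▸ m2)
      exact htS (by simpa using S.inv_mem hfin)
    have hle : commutator G ≤ S := by
      rw [commutator_def, Subgroup.commutator_le]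
      intro g1 _ g2 _
      exact hmain g1 g2
    calc Nat.card (commutator G) ≤ Nat.card S := Subgroup.card_le_of_le hle
      _ ≤ p := hScard u
end

section
/- Let G be a finite 2-group with d(G') ≤ 2, C_G(G'/(G')^2) = G, and (G')^2 ≠ 1. Then [G, G^2] = (G')^2, and moreover [G^2, G^2] ≤ (G')^4. -/
namespace TwoGroupAux

open scoped commutatorElement

open Subgroup

variable {G : Type*} [Group G]

/- ### Commutator identities -/

theorem comm_mul_right (a b c : G) : ⁅a, b*c⁆ = ⁅a,b⁆ * (b * ⁅a,c⁆ * b⁻¹) := by group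

theorem comm_inv_right (a b : G) : ⁅a, b⁻¹⁆ = b⁻¹ * ⁅a,b⁆⁻¹ * b := by group

theorem comm_mul_left (a b c : G) : ⁅a*b, c⁆ = (a * ⁅b,c⁆ * a⁻¹) * ⁅a,c⁆ := by group

theorem comm_inv_left (a b : G) : ⁅a⁻¹, b⁆ = a⁻¹ * ⁅a,b⁆⁻¹ * a := by group

theorem comm_sq_right (a b : G) : ⁅a, b^2⁆ = ⁅a,b⁆^2 * ⁅⁅a,b⁆⁻¹, b⁆ := by
  simp only [pow_two]; group

theorem comm_sq_left (a b : G) :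
    ⁅a^2, b⁆ = ⁅a,b⁆^2 * (⁅a,b⁆⁻¹ * ⁅⁅a,b⁆⁻¹, a⁆ * ⁅a,b⁆) := by
  simp only [pow_two]; group

theorem sq_mul (a b : G) : (a*b)^2 = a^2 * ⁅a⁻¹,b⁆ * b^2 := by
  simp only [pow_two]; group

theorem comm_eq_sq (g h : G) : ⁅g,h⁆ = (g*h)^2 * (h⁻¹*(g⁻¹)^2*h) * (h⁻¹)^2 := by
  simp only [pow_two]; group

theorem sq_comm_eq (g h : G) : ⁅g,h⁆^2 = ⁅g, h^2⁆ * ⁅h, ⁅g,h⁆⁻¹⁆ := by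
  simp only [pow_two]; group

theorem mul_sq (u v : G) : (u*v)^2 = u^2 * (u⁻¹ * v * u) * v := by
  simp only [pow_two]; group

theorem hall_witt (x y z : G) :
    ⁅⁅x,y⁆, z⁆ = x * ((y * ⁅x⁻¹,⁅y⁻¹,z⁆⁆ * y⁻¹) * (z * ⁅y,⁅z⁻¹,x⁻¹⁆⁆ * z⁻¹)) * x⁻¹ := by
  group

/- ### closure helper lemmas -/

theorem comm_closure_right_le {A N : Subgroup G} (hN : N.Normal) {S : Set G}
    (h : ∀ s ∈ S, ∀ a ∈ A, ⁅a, s⁆ ∈ N) : ⁅A, closure S⁆ ≤ N := by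
  rw [commutator_le]
  intro a ha t ht
  induction ht using closure_induction with
  | mem s hs => exact h s hs a ha
  | one => simpa using N.one_mem
  | mul x y hx hy px py =>
      rw [comm_mul_right]
      exact N.mul_mem px (hN.conj_mem _ py x)
  | inv x hx px =>
      rw [comm_inv_right]
      have h2 := hN.conj_mem _ (N.inv_mem px) x⁻¹
      simpa using h2

theorem comm_closure_left_le {B N : Subgroup G} (hN : N.Normal) {S : Set G}
    (h : ∀ s ∈ S, ∀ b ∈ B, ⁅s, b⁆ ∈ N) : ⁅closure S, B⁆ ≤ N := by
  rw [commutator_le]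
  intro t ht b hb
  induction ht using closure_induction with
  | mem s hs => exact h s hs b hb
  | one => simpa using N.one_mem
  | mul x y hx hy px py =>
      rw [comm_mul_left]
      exact N.mul_mem (hN.conj_mem _ py x) px
  | inv x hx px =>
      rw [comm_inv_left]
      have h2 := hN.conj_mem _ (N.inv_mem px) x⁻¹
      simpa using h2

/-- Three subgroups lemma, `≤` version. -/
theorem three_subgroups {A B C N : Subgroup G} (hN : N.Normal)
    (h1 : ⁅A, ⁅B,C⁆⁆ ≤ N) (h2 : ⁅B, ⁅C,A⁆⁆ ≤ N) : ⁅⁅A,B⁆,C⁆ ≤ N := by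
  rw [Subgroup.commutator_def A B]
  apply comm_closure_left_le hN
  rintro s ⟨x, hx, y, hy, rfl⟩ z hz
  rw [hall_witt]
  refine hN.conj_mem _ (N.mul_mem (hN.conj_mem _ ?_ y) (hN.conj_mem _ ?_ z)) x
  · exact h1 (commutator_mem_commutator (A.inv_mem hx)
      (commutator_mem_commutator (B.inv_mem hy) hz))
  · exact h2 (commutator_mem_commutator hy
      (commutator_mem_commutator (C.inv_mem hz) (A.inv_mem hx)))

/-- `[γᵢ₊₁, γⱼ₊₁] ≤ γᵢ₊ⱼ₊₂` in `lowerCentralSeries` indexing. -/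
theorem lcs_comm_le (j i : ℕ) :
    ⁅Subgroup.lowerCentralSeries (⊤ : Subgroup G) i, Subgroup.lowerCentralSeries (⊤ : Subgroup G) j⁆ ≤ Subgroup.lowerCentralSeries (⊤ : Subgroup G) (i+j+1) := by
  induction j generalizing i with
  | zero =>
      rw [Subgroup.lowerCentralSeries_zero]
      exact le_of_eq rfl
  | succ j ih =>
      have e : ⁅Subgroup.lowerCentralSeries (⊤ : Subgroup G) i, Subgroup.lowerCentralSeries (⊤ : Subgroup G) (j+1)⁆
          = ⁅⁅Subgroup.lowerCentralSeries (⊤ : Subgroup G) j, (⊤ : Subgroup G)⁆, Subgroup.lowerCentralSeries (⊤ : Subgroup G) i⁆ := by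
        rw [commutator_comm]; exact rfl
      rw [e, show i+(j+1)+1 = (i+j+1)+1 by omega]
      refine three_subgroups inferInstance ?_ ?_
      · have e2 : ⁅(⊤ : Subgroup G), Subgroup.lowerCentralSeries (⊤ : Subgroup G) i⁆
            = Subgroup.lowerCentralSeries (⊤ : Subgroup G) (i+1) := by rw [commutator_comm]; exact rfl
        rw [e2, commutator_comm]
        have h3 := ih (i+1)
        rwa [show i+1+j+1 = (i+j+1)+1 by omega] at h3
      · have h4 : ⁅Subgroup.lowerCentralSeries (⊤ : Subgroup G) i, Subgroup.lowerCentralSeries (⊤ : Subgroup G) j⁆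
            ≤ Subgroup.lowerCentralSeries (⊤ : Subgroup G) (i+j+1) := ih i
        calc ⁅(⊤ : Subgroup G), ⁅Subgroup.lowerCentralSeries (⊤ : Subgroup G) i, Subgroup.lowerCentralSeries (⊤ : Subgroup G) j⁆⁆
            = ⁅⁅Subgroup.lowerCentralSeries (⊤ : Subgroup G) i, Subgroup.lowerCentralSeries (⊤ : Subgroup G) j⁆, (⊤ : Subgroup G)⁆ :=
              commutator_comm _ _
          _ ≤ ⁅Subgroup.lowerCentralSeries (⊤ : Subgroup G) (i+j+1), (⊤ : Subgroup G)⁆ :=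
              commutator_mono h4 le_rfl
          _ = Subgroup.lowerCentralSeries (⊤ : Subgroup G) ((i+j+1)+1) := rfl

/- ### subPow lemmas -/

theorem mem_subPow_of_mem {H : Subgroup G} {x : G} (hx : x ∈ H) (n : ℕ) :
    x ^ n ∈ subPow H n :=
  subset_closure ⟨x, hx, rfl⟩

theorem subPow_le {H K : Subgroup G} {n : ℕ} (h : ∀ x ∈ H, x ^ n ∈ K) : subPow H n ≤ K :=
  (closure_le K).2 (by rintro _ ⟨x, hx, rfl⟩; exact h x hx)

instance subPow_normal (H : Subgroup G) [hH : H.Normal] (n : ℕ) : (subPow H n).Normal := by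
  constructor
  intro m hm g
  induction hm using closure_induction with
  | mem x hx =>
      obtain ⟨y, hy, rfl⟩ := hx
      show g * y ^ n * g⁻¹ ∈ subPow H n
      have e : g * y ^ n * g⁻¹ = (g * y * g⁻¹) ^ n := by
        rw [← MulAut.conj_apply, map_pow, MulAut.conj_apply]
      rw [e]
      exact mem_subPow_of_mem (hH.conj_mem y hy g) n
  | one => simpa using (subPow H n).one_mem
  | mul x y hx hy px py =>
      have e : g * (x*y) * g⁻¹ = (g*x*g⁻¹) * (g*y*g⁻¹) := by group
      rw [e]; exact mul_mem px py
  | inv x hx px =>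
      have e : g * x⁻¹ * g⁻¹ = (g*x*g⁻¹)⁻¹ := by group
      rw [e]; exact inv_mem px


theorem subPow_def' {G : Type*} [Group G] (H : Subgroup G) (n : ℕ) :
    subPow H n = Subgroup.closure ((· ^ n) '' (H : Set G)) := rfl

theorem comm_closure_closure_le {G : Type*} [Group G] {N : Subgroup G} (hN : N.Normal)
    (S T : Set G) (h : ∀ s ∈ S, ∀ t ∈ T, ⁅s, t⁆ ∈ N) :
    ⁅closure S, closure T⁆ ≤ N := by
  apply comm_closure_left_le hN
  intro s hs b hb
  induction hb using closure_induction with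
  | mem t ht => exact h s hs t ht
  | one => simpa using N.one_mem
  | mul x y hx hy px py =>
      rw [comm_mul_right]
      exact N.mul_mem px (hN.conj_mem _ py x)
  | inv x hx px =>
      rw [comm_inv_right]
      have h2 := hN.conj_mem _ (N.inv_mem px) x⁻¹
      simpa using h2

end TwoGroupAux


open TwoGroupAux Subgroup
open scoped commutatorElement

/-- Let `G` be a finite `2`-group with `d(G') ≤ 2`, `C_G(G'/(G')²) = G`
(i.e. `[G, G'] ≤ (G')²`) and `(G')² ≠ 1`. Then `[G, G²] = (G')²` and
`[G², G²] ≤ (G')⁴`. -/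
theorem two_group_commutator_squares
    {G : Type*} [Group G] [Finite G] (hG : IsPGroup 2 G)
    (hgen : ∃ a b : G, commutator G = Subgroup.closure {a, b})
    (hcent : ⁅(⊤ : Subgroup G), commutator G⁆ ≤ subPow (commutator G) 2)
    (hnt : subPow (commutator G) 2 ≠ ⊥) :
    ⁅(⊤ : Subgroup G), subPow ⊤ 2⁆ = subPow (commutator G) 2 ∧
      ⁅subPow (⊤ : Subgroup G) 2, subPow (⊤ : Subgroup G) 2⁆ ≤
        subPow (commutator G) 4 := by
  clear hgen hnt
  haveI : Fact (Nat.Prime 2) := ⟨Nat.prime_two⟩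
  have hKn : (subPow (commutator G) 2).Normal := inferInstance
  have hLn : (subPow (commutator G) 4).Normal := inferInstance
  have hTn : (subPow (⊤ : Subgroup G) 2).Normal := inferInstance
  have hNn : (subPow (commutator G) 4 ⊔ Subgroup.lowerCentralSeries (⊤ : Subgroup G) 4).Normal := inferInstance
  -- elementwise consequences of `hcent`
  have hcomm : ∀ g h : G, ⁅g, h⁆ ∈ commutator G := fun g h => by
    rw [commutator_def]; exact commutator_mem_commutator (mem_top g) (mem_top h)
  have h1 : ∀ (g x : G), x ∈ commutator G → ⁅g, x⁆ ∈ subPow (commutator G) 2 :=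
    fun g x hx => hcent (commutator_mem_commutator (mem_top g) hx)
  have h1' : ∀ (g x : G), x ∈ commutator G → ⁅x, g⁆ ∈ subPow (commutator G) 2 := by
    intro g x hx
    rw [← commutatorElement_inv]
    exact inv_mem (h1 g x hx)
  -- `commutator G ≤ G²`
  have hHT : commutator G ≤ subPow (⊤ : Subgroup G) 2 := by
    rw [commutator_def]
    refine commutator_le.mpr fun g _ h _ => ?_
    rw [comm_eq_sq g h]
    refine mul_mem (mul_mem (mem_subPow_of_mem (mem_top (g*h)) 2) ?_)
      (mem_subPow_of_mem (mem_top h⁻¹) 2)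
    have := hTn.conj_mem ((g⁻¹)^2) (mem_subPow_of_mem (mem_top g⁻¹) 2) h⁻¹
    simpa using this
  -- Part 1, `≤`
  have partA : ⁅(⊤ : Subgroup G), subPow (⊤ : Subgroup G) 2⁆ ≤ subPow (commutator G) 2 := by
    rw [subPow_def' (⊤ : Subgroup G) 2]
    apply comm_closure_right_le hKn
    rintro s ⟨y, -, rfl⟩ g -
    show ⁅g, y^2⁆ ∈ subPow (commutator G) 2
    rw [comm_sq_right]
    exact mul_mem (mem_subPow_of_mem (hcomm g y) 2)
      (h1' y ⁅g,y⁆⁻¹ (inv_mem (hcomm g y)))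
  -- Part 1, `≥`
  have partB : subPow (commutator G) 2 ≤ ⁅(⊤ : Subgroup G), subPow (⊤ : Subgroup G) 2⁆ := by
    apply subPow_le
    intro x hx
    have hx' : x ∈ Subgroup.closure (commutatorSet G) := by
      rwa [← commutator_eq_closure]
    clear hx
    induction hx' using closure_induction with
    | mem c hc =>
        obtain ⟨g, h, rfl⟩ := hc
        rw [sq_comm_eq]
        refine mul_mem (commutator_mem_commutator (mem_top g)
          (mem_subPow_of_mem (mem_top h) 2)) ?_
        exact commutator_mem_commutator (mem_top h) (inv_mem (hHT (hcomm g h)))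
    | one => simpa using one_mem _
    | mul u v hu hv pu pv =>
        rw [sq_mul]
        refine mul_mem (mul_mem pu ?_) pv
        have hv' : v ∈ commutator G := by rwa [commutator_eq_closure]
        exact commutator_mem_commutator (mem_top u⁻¹) (hHT hv')
    | inv u hu pu =>
        rw [inv_pow]
        exact inv_mem pu
  -- lower central series facts
  have hH1 : commutator G ≤ Subgroup.lowerCentralSeries (⊤ : Subgroup G) 1 := le_of_eq Subgroup.top_lowerCentralSeries_one.symm
  have hlcs2K : Subgroup.lowerCentralSeries (⊤ : Subgroup G) 2 ≤ subPow (commutator G) 2 := by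
    have e : Subgroup.lowerCentralSeries (⊤ : Subgroup G) 2 = ⁅(⊤ : Subgroup G), commutator G⁆ := by
      have e2 : Subgroup.lowerCentralSeries (⊤ : Subgroup G) 2 = ⁅Subgroup.lowerCentralSeries (⊤ : Subgroup G) 1, (⊤ : Subgroup G)⁆ := rfl
      rw [e2, Subgroup.top_lowerCentralSeries_one, commutator_comm]
    rw [e]; exact hcent
  have hHH3 : ∀ x y : G, x ∈ commutator G → y ∈ commutator G →
      ⁅x, y⁆ ∈ Subgroup.lowerCentralSeries (⊤ : Subgroup G) 3 := by
    intro x y hx hy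
    exact lcs_comm_le 1 1 (commutator_mem_commutator (hH1 hx) (hH1 hy))
  have h31 : ⁅Subgroup.lowerCentralSeries (⊤ : Subgroup G) 3, Subgroup.lowerCentralSeries (⊤ : Subgroup G) 1⁆ ≤ Subgroup.lowerCentralSeries (⊤ : Subgroup G) 4 :=
    (lcs_comm_le 1 3).trans (Subgroup.lowerCentralSeries_antitone ⊤ (by omega))
  have h21 : ⁅Subgroup.lowerCentralSeries (⊤ : Subgroup G) 2, Subgroup.lowerCentralSeries (⊤ : Subgroup G) 1⁆ ≤ Subgroup.lowerCentralSeries (⊤ : Subgroup G) 4 :=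
    lcs_comm_le 1 2
  -- base case for `⁅K,K⁆`
  have hbase : ∀ x y : G, x ∈ commutator G → y ∈ commutator G →
      ⁅x^2, y^2⁆ ∈ subPow (commutator G) 4 ⊔ Subgroup.lowerCentralSeries (⊤ : Subgroup G) 4 := by
    intro x y hx hy
    have hc : ⁅x,y⁆ ∈ commutator G := hcomm x y
    have hc3 : ⁅x,y⁆ ∈ Subgroup.lowerCentralSeries (⊤ : Subgroup G) 3 := hHH3 x y hx hy
    have hj1 : ⁅⁅x,y⁆⁻¹, x⁆ ∈ Subgroup.lowerCentralSeries (⊤ : Subgroup G) 4 :=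
      h31 (commutator_mem_commutator (inv_mem hc3) (hH1 hx))
    have hj2 : ⁅x,y⁆⁻¹ * ⁅⁅x,y⁆⁻¹, x⁆ * ⁅x,y⁆ ∈ Subgroup.lowerCentralSeries (⊤ : Subgroup G) 4 := by
      have := (Subgroup.lowerCentralSeries_normal ⊤ 4).conj_mem _ hj1 ⁅x,y⁆⁻¹
      simpa using this
    have hw3 : ⁅x^2, y⁆ ∈ Subgroup.lowerCentralSeries (⊤ : Subgroup G) 3 := hHH3 _ y (pow_mem hx 2) hy
    have hwy : ⁅⁅x^2,y⁆⁻¹, y⁆ ∈ Subgroup.lowerCentralSeries (⊤ : Subgroup G) 4 :=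
      h31 (commutator_mem_commutator (inv_mem hw3) (hH1 hy))
    rw [comm_sq_right]
    refine mul_mem ?_ (mem_sup_right hwy)
    rw [comm_sq_left x y, mul_sq]
    refine mul_mem (mul_mem ?_ ?_) (mem_sup_right hj2)
    · have e : ((⁅x,y⁆^2)^2 : G) = ⁅x,y⁆^4 := by group
      rw [e]
      exact mem_sup_left (mem_subPow_of_mem hc 4)
    · have := (Subgroup.lowerCentralSeries_normal ⊤ 4).conj_mem _ hj2 (⁅x,y⁆^2)⁻¹
      simp only [inv_inv] at this
      exact mem_sup_right this
  -- `⁅K,K⁆ ≤ L ⊔ γ₅`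
  have hKK : ⁅subPow (commutator G) 2, subPow (commutator G) 2⁆ ≤
      subPow (commutator G) 4 ⊔ Subgroup.lowerCentralSeries (⊤ : Subgroup G) 4 := by
    rw [subPow_def' (commutator G) 2]
    apply comm_closure_closure_le hNn
    rintro s ⟨x, hx, rfl⟩ t ⟨y, hy, rfl⟩
    exact hbase x y hx hy
  -- squares of elements of `K`
  have hsqK : ∀ k ∈ subPow (commutator G) 2,
      k^2 ∈ subPow (commutator G) 4 ⊔ Subgroup.lowerCentralSeries (⊤ : Subgroup G) 4 := by
    intro k hk
    rw [subPow_def' (commutator G) 2] at hk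
    induction hk using closure_induction with
    | mem s hs =>
        obtain ⟨x, hx, rfl⟩ := hs
        show ((x^2)^2 : G) ∈ _
        have e : ((x^2)^2 : G) = x^4 := by group
        rw [e]
        exact mem_sup_left (mem_subPow_of_mem hx 4)
    | one => simpa using one_mem _
    | mul u v hu hv pu pv =>
        rw [sq_mul]
        refine mul_mem (mul_mem pu ?_) pv
        exact hKK (commutator_mem_commutator
          (inv_mem (show u ∈ subPow (commutator G) 2 by
            rw [subPow_def' (commutator G) 2]; exact hu))
          (show v ∈ subPow (commutator G) 2 by
            rw [subPow_def' (commutator G) 2]; exact hv))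
    | inv u hu pu =>
        rw [inv_pow]
        exact inv_mem pu
  -- `⁅G, K⁆ ≤ L ⊔ γ₅`
  have hTK : ⁅(⊤ : Subgroup G), subPow (commutator G) 2⁆ ≤
      subPow (commutator G) 4 ⊔ Subgroup.lowerCentralSeries (⊤ : Subgroup G) 4 := by
    rw [subPow_def' (commutator G) 2]
    apply comm_closure_right_le hNn
    rintro s ⟨x, hx, rfl⟩ g -
    show ⁅g, x^2⁆ ∈ _
    rw [comm_sq_right]
    refine mul_mem (hsqK _ (h1 g x hx)) ?_
    have hu2 : ⁅g,x⁆ ∈ Subgroup.lowerCentralSeries (⊤ : Subgroup G) 2 := by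
      rw [← commutatorElement_inv]
      exact inv_mem (commutator_mem_commutator (hH1 hx) (mem_top g))
    exact mem_sup_right (h21 (commutator_mem_commutator (inv_mem hu2) (hH1 hx)))
  -- `γ₄ ≤ L ⊔ γ₅`
  have hlcs3 : Subgroup.lowerCentralSeries (⊤ : Subgroup G) 3 ≤
      subPow (commutator G) 4 ⊔ Subgroup.lowerCentralSeries (⊤ : Subgroup G) 4 := by
    have e : Subgroup.lowerCentralSeries (⊤ : Subgroup G) 3 = ⁅(⊤ : Subgroup G), Subgroup.lowerCentralSeries (⊤ : Subgroup G) 2⁆ := by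
      have e2 : Subgroup.lowerCentralSeries (⊤ : Subgroup G) 3 = ⁅Subgroup.lowerCentralSeries (⊤ : Subgroup G) 2, (⊤ : Subgroup G)⁆ := rfl
      rw [e2, commutator_comm]
    rw [e]
    exact (commutator_mono le_rfl hlcs2K).trans hTK
  -- descent along the lower central series
  have hstep : ∀ n, 3 ≤ n → Subgroup.lowerCentralSeries (⊤ : Subgroup G) n ≤
      subPow (commutator G) 4 ⊔ Subgroup.lowerCentralSeries (⊤ : Subgroup G) (n+1) := by
    intro n hn
    induction n with
    | zero => omega
    | succ m ih =>
        by_cases hm : 3 ≤ m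
        · have hmle := ih hm
          have h5 : ⁅subPow (commutator G) 4 ⊔ Subgroup.lowerCentralSeries (⊤ : Subgroup G) (m+1), (⊤ : Subgroup G)⁆ ≤
              subPow (commutator G) 4 ⊔ Subgroup.lowerCentralSeries (⊤ : Subgroup G) (m+2) := by
            rw [sup_eq_closure]
            apply comm_closure_left_le inferInstance
            rintro s hs b -
            rcases hs with hs | hs
            · have e : ⁅s, b⁆ = s * (b * s⁻¹ * b⁻¹) := by group
              rw [e]
              exact mem_sup_left (mul_mem hs (hLn.conj_mem _ (inv_mem hs) b))
            · exact mem_sup_right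
                (show ⁅s, b⁆ ∈ Subgroup.lowerCentralSeries (⊤ : Subgroup G) (m+2) from
                  commutator_mem_commutator hs (mem_top b))
          calc Subgroup.lowerCentralSeries (⊤ : Subgroup G) (m+1)
              = ⁅Subgroup.lowerCentralSeries (⊤ : Subgroup G) m, (⊤ : Subgroup G)⁆ := rfl
            _ ≤ ⁅subPow (commutator G) 4 ⊔ Subgroup.lowerCentralSeries (⊤ : Subgroup G) (m+1), (⊤ : Subgroup G)⁆ :=
                commutator_mono hmle le_rfl
            _ ≤ subPow (commutator G) 4 ⊔ Subgroup.lowerCentralSeries (⊤ : Subgroup G) (m+2) := h5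
        · have hm2 : m = 2 := by omega
          subst hm2
          exact hlcs3
  have hchain : ∀ m : ℕ, Subgroup.lowerCentralSeries (⊤ : Subgroup G) 3 ≤
      subPow (commutator G) 4 ⊔ Subgroup.lowerCentralSeries (⊤ : Subgroup G) (3+m) := by
    intro m
    induction m with
    | zero => exact le_sup_right
    | succ m ih =>
        have h6 := hstep (3+m) (by omega)
        calc Subgroup.lowerCentralSeries (⊤ : Subgroup G) 3
            ≤ subPow (commutator G) 4 ⊔ Subgroup.lowerCentralSeries (⊤ : Subgroup G) (3+m) := ih
          _ ≤ subPow (commutator G) 4 ⊔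
              (subPow (commutator G) 4 ⊔ Subgroup.lowerCentralSeries (⊤ : Subgroup G) (3+m+1)) :=
                sup_le_sup_left h6 _
          _ = subPow (commutator G) 4 ⊔ Subgroup.lowerCentralSeries (⊤ : Subgroup G) (3+(m+1)) := by
                rw [← sup_assoc, sup_idem]
                exact rfl
  have h3L : Subgroup.lowerCentralSeries (⊤ : Subgroup G) 3 ≤ subPow (commutator G) 4 := by
    obtain ⟨n0, hn0⟩ := Subgroup.nilpotent_iff_lowerCentralSeries.mp hG.isNilpotent
    have h7 := hchain n0
    have h8 : Subgroup.lowerCentralSeries (⊤ : Subgroup G) (3+n0) = ⊥ :=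
      le_bot_iff.mp ((Subgroup.lowerCentralSeries_antitone ⊤ (by omega)).trans (le_of_eq hn0))
    rwa [h8, sup_bot_eq] at h7
  have h4L : Subgroup.lowerCentralSeries (⊤ : Subgroup G) 4 ≤ subPow (commutator G) 4 :=
    (Subgroup.lowerCentralSeries_antitone ⊤ (by omega)).trans h3L
  have hNL : subPow (commutator G) 4 ⊔ Subgroup.lowerCentralSeries (⊤ : Subgroup G) 4 ≤ subPow (commutator G) 4 :=
    sup_le le_rfl h4L
  have hsqKL : ∀ k ∈ subPow (commutator G) 2, k^2 ∈ subPow (commutator G) 4 :=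
    fun k hk => hNL (hsqK k hk)
  have hTKL : ⁅(⊤ : Subgroup G), subPow (commutator G) 2⁆ ≤ subPow (commutator G) 4 :=
    hTK.trans hNL
  -- final computation
  have hbase2 : ∀ g h : G, ⁅g^2, h^2⁆ ∈ subPow (commutator G) 4 := by
    intro g h
    have hc : ⁅g,h⁆ ∈ commutator G := hcomm g h
    have hvK : ⁅g^2, h⁆ ∈ subPow (commutator G) 2 := by
      rw [comm_sq_left]
      refine mul_mem (mem_subPow_of_mem hc 2) ?_
      have hj : ⁅⁅g,h⁆⁻¹, g⁆ ∈ subPow (commutator G) 2 := h1' g ⁅g,h⁆⁻¹ (inv_mem hc)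
      have := hKn.conj_mem _ hj ⁅g,h⁆⁻¹
      simpa using this
    rw [comm_sq_right]
    refine mul_mem (hsqKL _ hvK) ?_
    rw [← commutatorElement_inv]
    exact inv_mem (hTKL (commutator_mem_commutator (mem_top h) (inv_mem hvK)))
  refine ⟨le_antisymm partA partB, ?_⟩
  rw [subPow_def' (⊤ : Subgroup G) 2]
  apply comm_closure_closure_le hLn
  rintro s ⟨g, -, rfl⟩ t ⟨h, -, rfl⟩
  exact hbase2 g h
end
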